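/- The subgroup SO₂(ℚ) of rotation matrices with rational entries is dense in the special orthogonal group SO₂(ℝ). -/

import Mathlib

/-- `SO₂(ℝ)`: real 2×2 matrices of the form `[[a, b], [-b, a]]` with `a² + b² = 1`. -/
def SO2R : Set (Matrix (Fin 2) (Fin 2) ℝ) :=
  {A | A 1 1 = A 0 0 ∧ A 1 0 = -A 0 1 ∧ (A 0 0) ^ 2 + (A 0 1) ^ 2 = 1}

def so2mat (a b : ℝ) : Matrix (Fin 2) (Fin 2) ℝ := !![a, b; -b, a]

lemma so2mat_mem {a b : ℝ} (h : a ^ 2 + b ^ 2 = 1) : so2mat a b ∈ SO2R := by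
  refine ⟨?_, ?_, ?_⟩ <;> simp [so2mat, h]

lemma one_add_sq_ne (t : ℝ) : 1 + t ^ 2 ≠ 0 := by positivity

noncomputable def gmap (t : ℝ) : SO2R :=
  ⟨so2mat ((1 - t ^ 2) / (1 + t ^ 2)) (2 * t / (1 + t ^ 2)), by
    apply so2mat_mem
    field_simp
    ring⟩

lemma gmap_cont : Continuous gmap := by
  apply Continuous.subtype_mk
  apply continuous_pi; intro i
  apply continuous_pi; intro j
  have h1 : Continuous fun t : ℝ => (1 - t ^ 2) / (1 + t ^ 2) :=
    (continuous_const.sub (continuous_pow 2)).div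
      (continuous_const.add (continuous_pow 2)) one_add_sq_ne
  have h2 : Continuous fun t : ℝ => 2 * t / (1 + t ^ 2) :=
    (continuous_const.mul continuous_id).div
      (continuous_const.add (continuous_pow 2)) one_add_sq_ne
  fin_cases i <;> fin_cases j <;> simp [gmap, so2mat] <;> fun_prop

/-- `SO₂(ℚ)`, viewed inside `SO₂(ℝ)`: those matrices of `SO₂(ℝ)` all of whose
entries are rational. It is dense in `SO₂(ℝ)` (with the topology induced from
the space of real 2×2 matrices). -/
theorem SO2Q_dense_in_SO2R :
    Dense {A : SO2R | ∀ i j : Fin 2, ∃ q : ℚ, (A : Matrix (Fin 2) (Fin 2) ℝ) i j = (q : ℝ)} := by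
  set S := {A : SO2R | ∀ i j : Fin 2, ∃ q : ℚ, (A : Matrix (Fin 2) (Fin 2) ℝ) i j = (q : ℝ)}
  intro x
  obtain ⟨A, h11, h10, hpyth⟩ := x
  set a := A 0 0 with ha
  set b := A 0 1 with hb
  by_cases hcase : a = -1
  · -- then b = 0 and A has rational entries
    have hb0 : b = 0 := by
      have : b ^ 2 = 0 := by rw [hcase] at hpyth; nlinarith
      exact pow_eq_zero_iff (by norm_num) |>.mp this
    apply subset_closure
    intro i j
    fin_cases i <;> fin_cases j
    · exact ⟨-1, by push_cast; exact hcase⟩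
    · exact ⟨0, by push_cast; exact hb0⟩
    · exact ⟨0, by push_cast; rw [h10, hb0]; ring⟩
    · exact ⟨-1, by push_cast; rw [h11]; exact hcase⟩
  · -- x = gmap t for t = b / (1+a)
    have h1a : 1 + a ≠ 0 := fun h => hcase (by linarith)
    set t := b / (1 + a) with ht
    have ht2 : t ^ 2 = (1 - a) / (1 + a) := by
      rw [ht, div_pow]
      have hb2 : b ^ 2 = (1 - a) * (1 + a) := by nlinarith
      rw [hb2]
      field_simp
    have hx : (⟨A, h11, h10, hpyth⟩ : SO2R) = gmap t := by
      have hden : 1 + t ^ 2 = 2 / (1 + a) := by rw [ht2]; field_simp; ring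
      have hnum : 1 - t ^ 2 = 2 * a / (1 + a) := by rw [ht2]; field_simp; ring
      have e1 : (1 - t ^ 2) / (1 + t ^ 2) = a := by
        rw [hden, hnum]; field_simp
      have e2 : 2 * t / (1 + t ^ 2) = b := by
        rw [hden, ht]; field_simp
      apply Subtype.ext
      ext i j
      fin_cases i <;> fin_cases j <;>
        simp [gmap, so2mat, e1, e2, h11, h10, ← ha, ← hb]
    rw [hx]
    have hsub : gmap '' (Set.range ((↑) : ℚ → ℝ)) ⊆ S := by
      rintro _ ⟨_, ⟨q, rfl⟩, rfl⟩
      intro i j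
      fin_cases i <;> fin_cases j
      · exact ⟨(1 - q ^ 2) / (1 + q ^ 2), by simp [gmap, so2mat]⟩
      · exact ⟨2 * q / (1 + q ^ 2), by simp [gmap, so2mat]⟩
      · exact ⟨-(2 * q / (1 + q ^ 2)), by simp [gmap, so2mat]⟩
      · exact ⟨(1 - q ^ 2) / (1 + q ^ 2), by simp [gmap, so2mat]⟩
    have hmem : gmap t ∈ closure (gmap '' Set.range ((↑) : ℚ → ℝ)) := by
      have hdq : t ∈ closure (Set.range ((↑) : ℚ → ℝ)) := Rat.denseRange_cast t
      exact (image_closure_subset_closure_image gmap_cont) ⟨t, hdq, rfl⟩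
    exact closure_mono hsub hmem
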